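/- Let n ≥ 1 be an integer and let p be a prime. Then every Sylow p-subgroup P of the symmetric group Sym(n) satisfies |P| ≤ 2^(n-1). -/

import Mathlib

/-- Let `n ≥ 1` be an integer and let `p` be a prime. Then every Sylow `p`-subgroup `P`
of the symmetric group `Sym(n)` satisfies `|P| ≤ 2 ^ (n - 1)`. -/
theorem sylow_card_perm_le_two_pow (n p : ℕ) (hn : 1 ≤ n) (hp : p.Prime)
    (P : Sylow p (Equiv.Perm (Fin n))) :
    Nat.card P ≤ 2 ^ (n - 1) := by
  haveI : Fact p.Prime := ⟨hp⟩
  have hcard : Nat.card (Equiv.Perm (Fin n)) = Nat.factorial n := by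
    simp [Nat.card_eq_fintype_card, Fintype.card_perm]
  rw [Sylow.card_eq_multiplicity, hcard,
    Nat.factorization_def _ hp]
  set ν := padicValNat p (n.factorial) with hν
  -- digit sum is at least 1
  have hds : 1 ≤ (p.digits n).sum := by
    by_contra h
    push_neg at h
    have hsum : (p.digits n).sum = 0 := by omega
    have hall : ∀ x ∈ p.digits n, x = 0 := List.sum_eq_zero_iff.mp hsum
    have hof : ∀ l : List ℕ, (∀ x ∈ l, x = 0) → Nat.ofDigits p l = 0 := by
      intro l
      induction l with
      | nil => simp
      | cons a t ih =>
        intro hl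
        simp only [Nat.ofDigits_cons, ih (fun x hx => hl x (List.mem_cons_of_mem a hx)),
          hl a (List.mem_cons_self (a := a) (l := t))]
        simp
    have := Nat.ofDigits_digits p n
    rw [hof _ hall] at this
    omega
  have hleg : (p - 1) * ν ≤ n - 1 := by
    rw [hν, sub_one_mul_padicValNat_factorial]
    omega
  calc p ^ ν ≤ (2 ^ (p - 1)) ^ ν := by
        apply Nat.pow_le_pow_left
        have := Nat.lt_two_pow_self (n := p - 1)
        have := hp.one_lt
        omega
    _ = 2 ^ ((p - 1) * ν) := by rw [← pow_mul]
    _ ≤ 2 ^ (n - 1) := Nat.pow_le_pow_right (by norm_num) hleg
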